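/- arXiv:2206.02560 — 3 statements merged into one kernel-verified Lean document; each statement's English description precedes it below -/
import Mathlib

section
/- Let M be an even lattice, and let H, H' ⊆ A_M be isotropic cyclic subgroups of order d with H ∩ H' = 0 and A_M = H ⊕ H', where the ℚ/ℤ-valued pairing restricts to a perfect pairing between H and H'. Then H' is the unique isotropic subgroup of A_M isomorphic to ℤ/dℤ meeting H trivially: if H'' ≅ ℤ/dℤ is isotropic with H ∩ H'' = 0, then H'' = H'. -/
/-- The homomorphism `ℚ/ℤ → ℚ/2ℤ` induced by multiplication by `2`. -/
noncomputable def doubleHom : AddCircle (1 : ℚ) →+ AddCircle (2 : ℚ) :=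
  QuotientAddGroup.lift _
    ((QuotientAddGroup.mk' (AddSubgroup.zmultiples (2 : ℚ))).comp
      (zsmulAddGroupHom 2)) (by
    intro x hx
    obtain ⟨n, rfl⟩ := hx
    simp only [AddMonoidHom.mem_ker, AddMonoidHom.comp_apply, QuotientAddGroup.mk'_apply,
      QuotientAddGroup.eq_zero_iff]
    exact ⟨n, by simp [zsmulAddGroupHom]; ring⟩)

lemma doubleHom_eq_zero {t : AddCircle (1 : ℚ)} (h : doubleHom t = 0) : t = 0 := by
  induction t using QuotientAddGroup.induction_on with
  | H r =>
    have h2 : doubleHom (QuotientAddGroup.mk r) =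
        QuotientAddGroup.mk' (AddSubgroup.zmultiples (2 : ℚ)) ((2 : ℤ) • r) := rfl
    rw [h2, QuotientAddGroup.mk'_apply, QuotientAddGroup.eq_zero_iff] at h
    obtain ⟨n, hn⟩ := h
    rw [QuotientAddGroup.eq_zero_iff]
    refine ⟨n, ?_⟩
    have : (n : ℚ) * 2 = 2 * r := by simpa [zsmul_eq_mul] using hn
    push_cast [zsmul_eq_mul]
    linarith

/-- Let `M` be an even lattice with discriminant group `A = A_M`, carrying
the discriminant quadratic form `q : A → ℚ/2ℤ` and pairing `b : A × A → ℚ/ℤ` with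
`q(x+y) = q(x) + q(y) + 2·b(x,y)`.  If `H, H' ⊆ A` are isotropic cyclic subgroups of
order `d` with `H ∩ H' = 0`, `A = H ⊕ H'`, and the pairing restricts to a perfect
pairing between `H` and `H'`, then `H'` is the unique isotropic subgroup of `A`
isomorphic to `ℤ/dℤ` meeting `H` trivially. -/
theorem stmt7 {A : Type*} [AddCommGroup A] [Fintype A]
    (q : A → AddCircle (2 : ℚ)) (b : A →+ A →+ AddCircle (1 : ℚ))
    (hbsymm : ∀ x y : A, b x y = b y x)
    (hqb : ∀ x y : A, q (x + y) = q x + q y + doubleHom (b x y))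
    (d : ℕ) (hd : 1 < d)
    (H H' : AddSubgroup A)
    (hHcyc : Nonempty (H ≃+ ZMod d)) (hH'cyc : Nonempty (H' ≃+ ZMod d))
    (hHiso : ∀ x ∈ H, q x = 0) (hH'iso : ∀ x ∈ H', q x = 0)
    (hmeet : H ⊓ H' = ⊥) (hsum : H ⊔ H' = ⊤)
    (hperf : Function.Bijective fun x : H => (b (x : A)).comp H'.subtype) :
    ∀ H'' : AddSubgroup A, Nonempty (H'' ≃+ ZMod d) → (∀ x ∈ H'', q x = 0) →
      H ⊓ H'' = ⊥ → H'' = H' := by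
  intro H'' hH''cyc hH''iso hmeet''
  obtain ⟨e⟩ := hH''cyc
  have hd0 : (d : ℕ) ≠ 0 := by omega
  haveI : NeZero d := ⟨hd0⟩
  -- generator z of H''
  set z : A := ((e.symm 1 : H'') : A) with hz
  have hzmem : z ∈ H'' := (e.symm 1).2
  have hgen : ∀ w : H'', w = (e w).val • (e.symm 1) := by
    intro w
    apply e.injective
    rw [map_nsmul, e.apply_symm_apply, nsmul_eq_mul, mul_one, ZMod.natCast_val, ZMod.cast_id]
  -- every element of H'' is a natural multiple of z
  have hgen' : ∀ w ∈ H'', ∃ k : ℕ, w = k • z := by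
    intro w hw
    refine ⟨(e ⟨w, hw⟩).val, ?_⟩
    have h := congrArg Subtype.val (hgen ⟨w, hw⟩)
    simpa using h
  -- order of z is d
  have hordz : addOrderOf z = d := by
    have h1 : addOrderOf (e.symm 1 : H'') = addOrderOf (1 : ZMod d) := by
      exact addOrderOf_injective e.symm.toAddMonoidHom e.symm.injective 1
    have h2 : addOrderOf z = addOrderOf (e.symm 1 : H'') :=
      addOrderOf_injective H''.subtype Subtype.coe_injective (e.symm 1)
    rw [h2, h1, ZMod.addOrderOf_one]
  -- decompose z = x + y
  have hztop : z ∈ H ⊔ H' := hsum ▸ AddSubgroup.mem_top z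
  obtain ⟨x, hx, y, hy, hxy⟩ := AddSubgroup.mem_sup.mp hztop
  -- b x y = 0
  have hbxy : b x y = 0 := by
    apply doubleHom_eq_zero
    have := hqb x y
    rw [hxy] at this
    rw [hHiso x hx, hH'iso y hy, hH''iso z hzmem] at this
    simpa using this.symm
  -- order of y is d
  have hdy : d • y = 0 := by
    have hz0 : d • z = 0 := by
      rw [← hordz]; exact addOrderOf_nsmul_eq_zero z
    have : d • x + d • y = 0 := by rw [← smul_add, hxy, hz0]
    have hmem : d • y ∈ H ⊓ H' := by
      constructor
      · have : d • y = -(d • x) := by linear_combination (norm := abel) this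
        rw [this]; exact H.neg_mem (nsmul_mem hx d)
      · exact nsmul_mem hy d
    rw [hmeet] at hmem
    exact hmem
  have hordy : addOrderOf y = d := by
    have hdvd : addOrderOf y ∣ d := addOrderOf_dvd_of_nsmul_eq_zero hdy
    have hdvd2 : d ∣ addOrderOf y := by
      rw [← hordz]
      apply addOrderOf_dvd_of_nsmul_eq_zero
      -- addOrderOf y • z = addOrderOf y • x + addOrderOf y • y = addOrderOf y • x ∈ H
      have hy0 : addOrderOf y • y = 0 := addOrderOf_nsmul_eq_zero y
      have hzx : addOrderOf y • z = addOrderOf y • x := by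
        rw [← hxy, smul_add, hy0, add_zero]
      have hmem : addOrderOf y • z ∈ H ⊓ H'' := by
        constructor
        · rw [hzx]; exact nsmul_mem hx _
        · exact nsmul_mem hzmem _
      rw [hmeet''] at hmem
      exact hmem
    exact Nat.dvd_antisymm hdvd hdvd2
  -- cardinalities
  have hcardH' : Nat.card H' = d := by
    obtain ⟨e'⟩ := hH'cyc
    rw [Nat.card_congr e'.toEquiv, Nat.card_zmod]
  have hcardH'' : Nat.card H'' = d := by
    rw [Nat.card_congr e.toEquiv, Nat.card_zmod]
  -- zmultiples y = H'
  have hyH' : AddSubgroup.zmultiples y = H' := by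
    have hle : AddSubgroup.zmultiples y ≤ H' := by
      rintro _ ⟨k, rfl⟩
      exact AddSubgroup.zsmul_mem H' hy k
    have hcard : Nat.card (AddSubgroup.zmultiples y) = d := by
      rw [Nat.card_zmultiples, hordy]
    apply SetLike.coe_injective
    apply Set.eq_of_subset_of_ncard_le hle
    · rw [← Nat.card_coe_set_eq, ← Nat.card_coe_set_eq]
      show Nat.card H' ≤ Nat.card (AddSubgroup.zmultiples y)
      omega
  -- x = 0
  have hx0 : x = 0 := by
    have hmap : (b x).comp H'.subtype = 0 := by
      ext ⟨h', hh'⟩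
      simp only [AddMonoidHom.comp_apply, AddSubgroup.coe_subtype, AddMonoidHom.zero_apply]
      rw [← hyH'] at hh'
      obtain ⟨k, rfl⟩ := hh'
      rw [map_zsmul, hbxy, smul_zero]
    have := hperf.injective (a₁ := ⟨x, hx⟩) (a₂ := ⟨0, H.zero_mem⟩) (by
      simp only [ZeroMemClass.coe_zero, map_zero]
      rw [hmap]
      ext w; simp)
    exact congrArg Subtype.val this
  have hzy : z = y := by rw [← hxy, hx0, zero_add]
  -- H'' ≤ H'
  have hle : H'' ≤ H' := by
    intro w hw
    obtain ⟨k, rfl⟩ := hgen' w hw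
    rw [hzy]
    exact nsmul_mem hy k
  apply SetLike.coe_injective
  apply Set.eq_of_subset_of_ncard_le hle
  · rw [← Nat.card_coe_set_eq, ← Nat.card_coe_set_eq]
    show Nat.card H' ≤ Nat.card H''
    omega
end

section
/- Let L be an even ℤ-lattice and L' an even lattice in L⊗ℚ, and let d = [L : L∩L'] = [L' : L∩L'] with d coprime to disc(L) (so L and L' are d-neighbors in the generalized sense that indices agree). If moreover L and L' have equal discriminant, then there is a natural isomorphism of discriminant groups A_L ≅ A_{L'}: precisely, writing M = L∩L' and Hᵢ the images of L, L' in A_M, the composite maps H₁^⊥/H₁ ≅ A_M/(H₁⊕H₂) ≅ H₂^⊥/H₂ yield an isomorphism A_L ≅ A_{L'}, provided |H₁| = |H₂| is coprime to disc(L). -/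
/-- The dual lattice `M^∨ = {x ∈ V : (x, M) ⊆ ℤ}` of a `ℤ`-lattice `M` in a rational
quadratic space `(V, B)`. -/
def dualLattice {V : Type*} [AddCommGroup V] [Module ℚ V]
    (B : V →ₗ[ℚ] V →ₗ[ℚ] ℚ) (M : Submodule ℤ V) : Submodule ℤ V where
  carrier := {x | ∀ m ∈ M, ∃ n : ℤ, B x m = (n : ℚ)}
  zero_mem' := fun m _ => ⟨0, by simp⟩
  add_mem' := by
    rintro a c ha hc m hm
    obtain ⟨n, hn⟩ := ha m hm
    obtain ⟨k, hk⟩ := hc m hm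
    exact ⟨n + k, by rw [map_add, LinearMap.add_apply, hn, hk]; push_cast; ring⟩
  smul_mem' := by
    rintro t x hx m hm
    obtain ⟨n, hn⟩ := hx m hm
    refine ⟨t * n, ?_⟩
    rw [map_zsmul, LinearMap.smul_apply, hn, zsmul_eq_mul]
    push_cast; ring

section aux
open Matrix
set_option linter.unusedSectionVars false
variable {ι V : Type*} [Fintype ι] [DecidableEq ι] [AddCommGroup V] [Module ℚ V]

lemma zsmul_mem_span {s : Set V} (n : ℤ) {v : V} (hv : v ∈ Submodule.span ℚ s) :
    n • v ∈ Submodule.span ℚ s := by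
  rw [← Int.cast_smul_eq_zsmul ℚ]
  exact Submodule.smul_mem _ _ hv

lemma spanP (P : Submodule ℤ V) (bP : Module.Basis ι ℤ P) {w : V} (hw : w ∈ P) :
    w ∈ Submodule.span ℚ (Set.range fun i => ((bP i : ↥P) : V)) := by
  have h := congrArg (P.subtype) (bP.sum_repr ⟨w, hw⟩)
  simp only [map_sum, map_zsmul, Submodule.subtype_apply] at h
  rw [← h]
  exact Submodule.sum_mem _ fun i _ =>
    zsmul_mem_span _ (Submodule.subset_span ⟨i, rfl⟩)

lemma spanQ (P Q : Submodule ℤ V) (bP : Module.Basis ι ℤ P) (d : ℤ) (hd : (d : ℚ) ≠ 0)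
    (hdQP : ∀ x ∈ Q, d • x ∈ P) {w : V} (hw : w ∈ Q) :
    w ∈ Submodule.span ℚ (Set.range fun i => ((bP i : ↥P) : V)) := by
  have h1 : d • w ∈ Submodule.span ℚ (Set.range fun i => ((bP i : ↥P) : V)) :=
    spanP P bP (hdQP w hw)
  have : w = (d : ℚ)⁻¹ • (d • w) := by
    rw [← Int.cast_smul_eq_zsmul ℚ, smul_smul, inv_mul_cancel₀ hd, one_smul]
  rw [this]
  exact Submodule.smul_mem _ _ h1

lemma ell (B : V →ₗ[ℚ] V →ₗ[ℚ] ℚ) (hsymm : ∀ x y : V, B x y = B y x)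
    (P : Submodule ℤ V) (bP : Module.Basis ι ℤ P)
    (hPeven : ∀ x ∈ P, ∃ n : ℤ, B x x = 2 * n)
    (N : ℤ) (hNP : (N : ℚ) = (Matrix.of fun i j => B (bP i : V) (bP j : V)).det) :
    ∀ x, x ∈ dualLattice B P → ∃ l, l ∈ P ∧
      ∀ w ∈ Submodule.span ℚ (Set.range fun i => ((bP i : ↥P) : V)),
        B l w = (N : ℚ) * B x w := by
  set f : ι → V := fun i => ((bP i : ↥P) : V) with hf
  have hfP : ∀ i, f i ∈ P := fun i => (bP i).2
  have hint : ∀ i j, ∃ n : ℤ, B (f i) (f j) = (n : ℚ) := by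
    intro i j
    obtain ⟨n1, h1⟩ := hPeven (f i) (hfP i)
    obtain ⟨n2, h2⟩ := hPeven (f j) (hfP j)
    obtain ⟨n3, h3⟩ := hPeven (f i + f j) (P.add_mem (hfP i) (hfP j))
    refine ⟨n3 - n1 - n2, ?_⟩
    have hexp : B (f i + f j) (f i + f j)
        = B (f i) (f i) + B (f i) (f j) + B (f j) (f i) + B (f j) (f j) := by
      simp [map_add, LinearMap.add_apply]; ring
    have hs := hsymm (f i) (f j)
    push_cast
    rw [hexp, h1, h2, hs] at h3
    linarith
  choose GZ hGZ using hint
  have hdet : ((Matrix.of GZ).det : ℚ) = (N : ℚ) := by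
    have heq : (Matrix.of fun i j => B (f i) (f j))
        = ((Int.castRingHom ℚ).mapMatrix (Matrix.of GZ)) := by
      ext i j
      simp [hGZ i j]
    rw [hNP, heq, ← RingHom.map_det]
    rfl
  intro x hx
  choose v hv using fun j => hx (f j) (hfP j)
  set c : ι → ℤ := (Matrix.of GZ)ᵀ.adjugate.mulVec v with hc
  refine ⟨∑ i, c i • f i, Submodule.sum_mem _ fun i _ => Submodule.smul_mem _ _ (hfP i), ?_⟩
  have base : ∀ j, B (∑ i, c i • f i) (f j) = (N : ℚ) * B x (f j) := by
    intro j
    have lhs : B (∑ i, c i • f i) (f j) = ∑ i, (c i : ℚ) * (GZ i j : ℚ) := by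
      rw [map_sum, LinearMap.sum_apply]
      refine Finset.sum_congr rfl fun i _ => ?_
      rw [map_zsmul, LinearMap.smul_apply, hGZ i j, zsmul_eq_mul]
    have key : ((Matrix.of GZ)ᵀ.mulVec c) j = (Matrix.of GZ).det * v j := by
      have : (Matrix.of GZ)ᵀ.mulVec c = (Matrix.of GZ).det • v := by
        rw [hc, Matrix.mulVec_mulVec, Matrix.mul_adjugate, Matrix.det_transpose,
          Matrix.smul_mulVec, Matrix.one_mulVec]
      rw [this]; simp [smul_eq_mul]
    have sumeq : ∑ i, (c i : ℚ) * (GZ i j : ℚ) = (((Matrix.of GZ)ᵀ.mulVec c) j : ℚ) := by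
      rw [Matrix.mulVec]
      push_cast
      simp only [dotProduct, Matrix.transpose_apply, Matrix.of_apply]
      push_cast
      exact Finset.sum_congr rfl fun i _ => by ring
    rw [lhs, sumeq, key, hv j]
    push_cast
    push_cast at hdet
    rw [hdet]
  intro w hw
  induction hw using Submodule.span_induction with
  | mem w h => obtain ⟨j, rfl⟩ := h; exact base j
  | zero => simp
  | add u w hu hw ihu ihw => simp only [map_add]; rw [ihu, ihw]; ring
  | smul a u hu ihu =>
      rw [LinearMap.map_smul ((B (∑ i, c i • f i))), LinearMap.map_smul (B x)]
      rw [smul_eq_mul, smul_eq_mul, ihu]; ring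

lemma nondeg (B : V →ₗ[ℚ] V →ₗ[ℚ] ℚ) (P : Submodule ℤ V) (bP : Module.Basis ι ℤ P)
    (N : ℤ) (hN0 : N ≠ 0)
    (hNP : (N : ℚ) = (Matrix.of fun i j => B (bP i : V) (bP j : V)).det) :
    ∀ u ∈ Submodule.span ℚ (Set.range fun i => ((bP i : ↥P) : V)),
      (∀ j, B u ((bP j : ↥P) : V) = 0) → u = 0 := by
  set f : ι → V := fun i => ((bP i : ↥P) : V) with hf
  set Gq : Matrix ι ι ℚ := Matrix.of fun i j => B (f i) (f j) with hGq
  intro u hu hortho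
  obtain ⟨c, hc⟩ := (Submodule.mem_span_range_iff_exists_fun ℚ).mp hu
  have hmv : Gqᵀ.mulVec c = 0 := by
    funext j
    have : B u (f j) = ∑ i, c i * B (f i) (f j) := by
      rw [← hc, map_sum, LinearMap.sum_apply]
      exact Finset.sum_congr rfl fun i _ => by
        rw [LinearMap.map_smul, LinearMap.smul_apply, smul_eq_mul]
    have h0 := hortho j
    rw [this] at h0
    simp only [Matrix.mulVec, dotProduct, Matrix.transpose_apply, Pi.zero_apply]
    rw [← h0]
    exact Finset.sum_congr rfl fun i _ => by rw [hGq]; simp [Matrix.of_apply]; ring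
  have hunit : IsUnit Gqᵀ.det := by
    rw [Matrix.det_transpose, ← hNP]
    exact isUnit_iff_ne_zero.mpr (by exact_mod_cast hN0)
  have hc0 : c = 0 := by
    have h1 := Matrix.nonsing_inv_mul Gqᵀ hunit
    calc c = (1 : Matrix ι ι ℚ).mulVec c := by rw [Matrix.one_mulVec]
    _ = (Gqᵀ⁻¹ * Gqᵀ).mulVec c := by rw [h1]
    _ = Gqᵀ⁻¹.mulVec (Gqᵀ.mulVec c) := by rw [Matrix.mulVec_mulVec]
    _ = 0 := by rw [hmv, Matrix.mulVec_zero]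
  rw [← hc, hc0]
  simp

lemma key (B : V →ₗ[ℚ] V →ₗ[ℚ] ℚ) (hsymm : ∀ x y : V, B x y = B y x)
    (P Q : Submodule ℤ V) (bP : Module.Basis ι ℤ P) (bQ : Module.Basis ι ℤ Q)
    (hPeven : ∀ x ∈ P, ∃ n : ℤ, B x x = 2 * n)
    (hQeven : ∀ x ∈ Q, ∃ n : ℤ, B x x = 2 * n)
    (N : ℤ) (hN0 : N ≠ 0)
    (hNP : (N : ℚ) = (Matrix.of fun i j => B (bP i : V) (bP j : V)).det)
    (hNQ : (N : ℚ) = (Matrix.of fun i j => B (bQ i : V) (bQ j : V)).det)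
    (d a b : ℤ) (hd0 : (d : ℚ) ≠ 0) (habd : a * d + b * N = 1)
    (hPQ : ∀ x ∈ P, d • x ∈ P ⊓ Q) (hQP : ∀ x ∈ Q, d • x ∈ P ⊓ Q) :
    ∃ F : ∀ x : V, x ∈ dualLattice B P → V,
      (∀ x hx, F x hx ∈ dualLattice B Q) ∧
      (∀ x hx, x - F x hx ∈ P) ∧
      (∀ x hx y, y ∈ dualLattice B Q → x - y ∈ P ⊔ Q → F x hx - y ∈ Q) := by
  choose l hl1 hl2 using ell B hsymm P bP hPeven N hNP
  choose l' hl'1 hl'2 using ell B hsymm Q bQ hQeven N hNQ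
  have hPsp : ∀ w ∈ P, w ∈ Submodule.span ℚ (Set.range fun i => ((bP i : ↥P) : V)) :=
    fun w hw => spanP P bP hw
  have hQsp : ∀ w ∈ Q, w ∈ Submodule.span ℚ (Set.range fun i => ((bP i : ↥P) : V)) :=
    fun w hw => spanQ P Q bP d hd0 (fun x hx => (hQP x hx).1) hw
  have hPsp' : ∀ w ∈ P, w ∈ Submodule.span ℚ (Set.range fun i => ((bQ i : ↥Q) : V)) :=
    fun w hw => spanQ Q P bQ d hd0 (fun x hx => (hPQ x hx).2) hw
  have hsupP : ∀ w ∈ P ⊔ Q, w ∈ Submodule.span ℚ (Set.range fun i => ((bP i : ↥P) : V)) := by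
    intro w hw
    obtain ⟨p, hp, q, hq, rfl⟩ := Submodule.mem_sup.mp hw
    exact Submodule.add_mem _ (hPsp p hp) (hQsp q hq)
  have hdsup : ∀ s ∈ P ⊔ Q, d • s ∈ Q := by
    intro s hs
    obtain ⟨p, hp, q, hq, rfl⟩ := Submodule.mem_sup.mp hs
    rw [smul_add]
    exact Q.add_mem (hPQ p hp).2 (hQP q hq).2
  have hbN : (1 : ℚ) - (b : ℚ) * (N : ℚ) = (a : ℚ) * (d : ℚ) := by
    have h : ((a * d + b * N : ℤ) : ℚ) = ((1 : ℤ) : ℚ) := by exact_mod_cast habd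
    push_cast at h
    linarith
  refine ⟨fun x hx => x - b • l x hx, ?_, ?_, ?_⟩
  · -- lands in dualLattice B Q
    intro x hx m' hm'
    obtain ⟨k, hk⟩ := hx (d • m') ((hQP m' hm').1)
    refine ⟨a * k, ?_⟩
    have h1 : B (l x hx) (d • m') = (N : ℚ) * B x (d • m') :=
      hl2 x hx _ (hPsp _ ((hQP m' hm').1))
    have expand : ∀ u : V, B u (d • m') = (d : ℚ) * B u m' := by
      intro u
      rw [map_zsmul, zsmul_eq_mul]
    have hmain : (d : ℚ) * B (x - b • l x hx) m' = (d : ℚ) * ((a : ℚ) * (k : ℚ)) := by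
      have e0 : B (x - b • l x hx) (d • m')
          = B x (d • m') - (b : ℚ) * B (l x hx) (d • m') := by
        have s1 : B (x - b • l x hx) = B x - b • B (l x hx) := by
          rw [map_sub, map_zsmul]
        rw [s1, LinearMap.sub_apply, LinearMap.smul_apply, zsmul_eq_mul]
      have e3 := expand (x - b • l x hx)
      rw [e0, h1, hk] at e3
      rw [← e3]
      linear_combination (k : ℚ) * hbN
    have := mul_left_cancel₀ hd0 hmain
    rw [this]
    push_cast
    ring
  · -- x - F x ∈ P
    intro x hx
    rw [sub_sub_cancel]
    exact Submodule.smul_mem _ _ (hl1 x hx)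
  · -- main compatibility
    intro x hx y hy hxy
    have hueq : l x hx - l' y hy - N • (x - y) = 0 := by
      apply nondeg B P bP N hN0 hNP
      · exact Submodule.sub_mem _ (Submodule.sub_mem _ (hPsp _ (hl1 x hx)) (hQsp _ (hl'1 y hy)))
          (zsmul_mem_span N (hsupP _ hxy))
      · intro j
        have e1 : B (l x hx) ((bP j : ↥P) : V) = (N : ℚ) * B x ((bP j : ↥P) : V) :=
          hl2 x hx _ (hPsp _ (bP j).2)
        have e2 : B (l' y hy) ((bP j : ↥P) : V) = (N : ℚ) * B y ((bP j : ↥P) : V) :=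
          hl'2 y hy _ (hPsp' _ (bP j).2)
        rw [map_sub, map_sub, LinearMap.sub_apply, LinearMap.sub_apply, e1, e2,
          map_zsmul, LinearMap.smul_apply, map_sub, LinearMap.sub_apply, zsmul_eq_mul]
        ring
    have hleq : l x hx = l' y hy + N • (x - y) := by
      have h2 : l x hx - (l' y hy + N • (x - y)) = 0 := by
        rw [← hueq]; abel
      have := sub_eq_zero.mp h2
      exact this
    have had : a * d = 1 - b * N := by linarith
    have hrw : (x - b • l x hx) - y = (a * d) • (x - y) - b • l' y hy := by
      rw [hleq, had, sub_smul, one_smul, smul_add, smul_smul]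
      abel
    rw [hrw, ← smul_smul]
    exact Submodule.sub_mem _ (Submodule.smul_mem _ _ (hdsup _ hxy))
      (Submodule.smul_mem _ _ (hl'1 y hy))

end aux

/-- If `L, L'` are even lattices in the same rational quadratic space with
`d = [L : L∩L'] = [L' : L∩L']` coprime to `disc L`, and `disc L = disc L'`, then there
is a natural isomorphism `A_L ≅ A_{L'}`: it sends the class of `x ∈ L^∨` to the class
of `y ∈ L'^∨` whenever `x − y ∈ L + L'` (the composite
`H₁^⊥/H₁ ≅ A_M/(H₁⊕H₂) ≅ H₂^⊥/H₂` of Nikulin's correspondence). -/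
theorem stmt8 {ι V : Type*} [Fintype ι] [DecidableEq ι] [AddCommGroup V] [Module ℚ V]
    (B : V →ₗ[ℚ] V →ₗ[ℚ] ℚ)
    (hsymm : ∀ x y : V, B x y = B y x)
    (hnd : ∀ x : V, (∀ y : V, B x y = 0) → x = 0)
    (L L' : Submodule ℤ V)
    (hLeven : ∀ x ∈ L, ∃ n : ℤ, B x x = 2 * n)
    (hL'even : ∀ x ∈ L', ∃ n : ℤ, B x x = 2 * n)
    (bL : Module.Basis ι ℤ L) (bL' : Module.Basis ι ℤ L')
    (N : ℤ) (hN : (N : ℚ) = (Matrix.of fun i j => B (bL i : V) (bL j : V)).det)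
    (hdisc : (Matrix.of fun i j => B (bL i : V) (bL j : V)).det
      = (Matrix.of fun i j => B (bL' i : V) (bL' j : V)).det)
    (d : ℕ) (hd : 1 < d) (hcop : IsCoprime (d : ℤ) N)
    (hquotL : Nonempty ((↥L ⧸ Submodule.comap L.subtype (L ⊓ L')) ≃+ ZMod d))
    (hquotL' : Nonempty ((↥L' ⧸ Submodule.comap L'.subtype (L ⊓ L')) ≃+ ZMod d)) :
    ∃ e : (↥(dualLattice B L) ⧸
        Submodule.comap (dualLattice B L).subtype L) ≃+
        (↥(dualLattice B L') ⧸ Submodule.comap (dualLattice B L').subtype L'),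
      ∀ (x : ↥(dualLattice B L)) (y : ↥(dualLattice B L')),
        (x : V) - (y : V) ∈ L ⊔ L' →
          e (Submodule.Quotient.mk x) = Submodule.Quotient.mk y := by
  obtain ⟨eL⟩ := hquotL
  obtain ⟨eL'⟩ := hquotL'
  have hzmod : ∀ z : ZMod d, (d : ℤ) • z = 0 := by
    intro z
    rw [zsmul_eq_mul]
    push_cast
    rw [ZMod.natCast_self, zero_mul]
  have hdL : ∀ x ∈ L, (d : ℤ) • x ∈ L ⊓ L' := by
    intro x hxL
    have h0 : ((d : ℤ) • (⟨x, hxL⟩ : ↥L)) ∈ Submodule.comap L.subtype (L ⊓ L') := by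
      rw [← Submodule.Quotient.mk_eq_zero]
      apply eL.injective
      rw [Submodule.Quotient.mk_smul, map_zsmul, map_zero, hzmod]
    exact h0
  have hdL' : ∀ x ∈ L', (d : ℤ) • x ∈ L ⊓ L' := by
    intro x hxL
    have h0 : ((d : ℤ) • (⟨x, hxL⟩ : ↥L')) ∈ Submodule.comap L'.subtype (L ⊓ L') := by
      rw [← Submodule.Quotient.mk_eq_zero]
      apply eL'.injective
      rw [Submodule.Quotient.mk_smul, map_zsmul, map_zero, hzmod]
    exact h0
  have hN0 : N ≠ 0 := by
    rintro rfl
    rw [isCoprime_zero_right] at hcop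
    rcases Int.isUnit_iff.mp hcop with h | h <;> omega
  have hd0 : (((d : ℤ) : ℚ)) ≠ 0 := by
    have : (d : ℤ) ≠ 0 := by omega
    exact_mod_cast this
  obtain ⟨a, b, hab⟩ := hcop
  have hNQ : (N : ℚ) = (Matrix.of fun i j => B (bL' i : V) (bL' j : V)).det := hN.trans hdisc
  obtain ⟨F, hF1, hF2, hF3⟩ := key B hsymm L L' bL bL' hLeven hL'even N hN0 hN hNQ
    (d : ℤ) a b hd0 hab hdL hdL'
  obtain ⟨G, hG1, hG2, hG3⟩ := key B hsymm L' L bL' bL hL'even hLeven N hN0 hNQ hN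
    (d : ℤ) a b hd0 hab
    (fun x hx => Submodule.mem_inf.mpr
      ⟨(Submodule.mem_inf.mp (hdL' x hx)).2, (Submodule.mem_inf.mp (hdL' x hx)).1⟩)
    (fun x hx => Submodule.mem_inf.mpr
      ⟨(Submodule.mem_inf.mp (hdL x hx)).2, (Submodule.mem_inf.mp (hdL x hx)).1⟩)
  let g : ↥(dualLattice B L) →
      (↥(dualLattice B L') ⧸ Submodule.comap (dualLattice B L').subtype L') :=
    fun x => Submodule.Quotient.mk ⟨F x.1 x.2, hF1 x.1 x.2⟩
  let g' : ↥(dualLattice B L') →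
      (↥(dualLattice B L) ⧸ Submodule.comap (dualLattice B L).subtype L) :=
    fun y => Submodule.Quotient.mk ⟨G y.1 y.2, hG1 y.1 y.2⟩
  have hgc : ∀ x x' : ↥(dualLattice B L),
      (Submodule.comap (dualLattice B L).subtype L).quotientRel x x' → g x = g x' := by
    intro x x' h
    have hmem0 := (Submodule.quotientRel_def _).mp h
    have hmem : ((x : V) - (x' : V)) ∈ L := hmem0
    apply (Submodule.Quotient.eq _).mpr
    show F x.1 x.2 - F x'.1 x'.2 ∈ L'
    have hyp : (x : V) - F x'.1 x'.2 ∈ L ⊔ L' := by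
      apply Submodule.mem_sup_left
      have h2 := hF2 x'.1 x'.2
      have h3 := L.add_mem hmem h2
      rwa [sub_add_sub_cancel] at h3
    exact hF3 x.1 x.2 (F x'.1 x'.2) (hF1 x'.1 x'.2) hyp
  have hg'c : ∀ y y' : ↥(dualLattice B L'),
      (Submodule.comap (dualLattice B L').subtype L').quotientRel y y' → g' y = g' y' := by
    intro y y' h
    have hmem0 := (Submodule.quotientRel_def _).mp h
    have hmem : ((y : V) - (y' : V)) ∈ L' := hmem0
    apply (Submodule.Quotient.eq _).mpr
    show G y.1 y.2 - G y'.1 y'.2 ∈ L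
    have hyp : (y : V) - G y'.1 y'.2 ∈ L' ⊔ L := by
      apply Submodule.mem_sup_left
      have h2 := hG2 y'.1 y'.2
      have h3 := L'.add_mem hmem h2
      rwa [sub_add_sub_cancel] at h3
    exact hG3 y.1 y.2 (G y'.1 y'.2) (hG1 y'.1 y'.2) hyp
  refine ⟨{ toFun := fun z => Quotient.liftOn' z g hgc
            invFun := fun z => Quotient.liftOn' z g' hg'c
            left_inv := ?_
            right_inv := ?_
            map_add' := ?_ }, ?_⟩
  · intro z
    induction z using Quotient.inductionOn' with
    | h x =>
      show g' ⟨F x.1 x.2, hF1 x.1 x.2⟩ = Quotient.mk'' x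
      apply (Submodule.Quotient.eq _).mpr
      show G (F x.1 x.2) (hF1 x.1 x.2) - (x : V) ∈ L
      have hyp : F x.1 x.2 - (x : V) ∈ L' ⊔ L := by
        apply Submodule.mem_sup_right
        have h3 := L.neg_mem (hF2 x.1 x.2)
        rwa [neg_sub] at h3
      exact hG3 (F x.1 x.2) (hF1 x.1 x.2) x.1 x.2 hyp
  · intro z
    induction z using Quotient.inductionOn' with
    | h y =>
      show g ⟨G y.1 y.2, hG1 y.1 y.2⟩ = Quotient.mk'' y
      apply (Submodule.Quotient.eq _).mpr
      show F (G y.1 y.2) (hG1 y.1 y.2) - (y : V) ∈ L'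
      have hyp : G y.1 y.2 - (y : V) ∈ L ⊔ L' := by
        apply Submodule.mem_sup_right
        have h3 := L'.neg_mem (hG2 y.1 y.2)
        rwa [neg_sub] at h3
      exact hF3 (G y.1 y.2) (hG1 y.1 y.2) y.1 y.2 hyp
  · intro z w
    induction z using Quotient.inductionOn' with
    | h x =>
      induction w using Quotient.inductionOn' with
      | h y =>
        show g (x + y) = g x + g y
        show Submodule.Quotient.mk _
          = Submodule.Quotient.mk _ + Submodule.Quotient.mk _
        rw [← Submodule.Quotient.mk_add]
        apply (Submodule.Quotient.eq _).mpr
        show F ((x : V) + (y : V)) _ - (F x.1 x.2 + F y.1 y.2) ∈ L'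
        have hyp : ((x : V) + (y : V)) - (F x.1 x.2 + F y.1 y.2) ∈ L ⊔ L' := by
          apply Submodule.mem_sup_left
          have h3 := L.add_mem (hF2 x.1 x.2) (hF2 y.1 y.2)
          rwa [sub_add_sub_comm] at h3
        exact hF3 ((x : V) + (y : V)) ((dualLattice B L).add_mem x.2 y.2)
          (F x.1 x.2 + F y.1 y.2)
          ((dualLattice B L').add_mem (hF1 x.1 x.2) (hF1 y.1 y.2)) hyp
  · intro x y hxy
    show g x = Submodule.Quotient.mk y
    apply (Submodule.Quotient.eq _).mpr
    show F x.1 x.2 - (y : V) ∈ L'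
    exact hF3 x.1 x.2 y.1 y.2 hxy
end

section
/- Let H₁ = ℤ·(d·e₁) ⊕ ℤ·f₁ and H₂ = ℤ·(d·e₂) ⊕ ℤ·f₂ be index-d sublattices of the hyperbolic-type lattices ℤe₁⊕ℤf₁ and ℤe₂⊕ℤf₂. Consider T = H¹(E₁)⊗H¹(E₂) with Gram matrix as in the tensor product of two rank-2 symplectic/hyperbolic structures giving the quadratic form q(a,b,c,e) = 2(ae − bc) in the basis v₁=e₁⊗e₂, v₂=e₁⊗f₂, v₃=f₁⊗e₂, v₄=f₁⊗f₂ (so (v₁,v₄)=1, (v₂,v₃)=−1, all other pairings 0). Then T' := (1/d)(H₁⊗H₂), generated by dv₁, v₂, v₃, (1/d)v₄, is an even lattice isometric to T and is a d-neighbor of T: T/(T∩T') ≅ T'/(T∩T') ≅ ℤ/dℤ. -/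
set_option maxRecDepth 8000


/-- The bilinear pairing on `ℚ⁴` with Gram matrix
`[[0,0,0,1],[0,0,−1,0],[0,−1,0,0],[1,0,0,0]]`, i.e. the form of
`T = H¹(E₁) ⊗ H¹(E₂)` with `q(a,b,c,e) = 2(ae − bc)`. -/
def kummerForm (x y : Fin 4 → ℚ) : ℚ :=
  dotProduct x ((!![0,0,0,1; 0,0,-1,0; 0,-1,0,0; 1,0,0,0] : Matrix (Fin 4) (Fin 4) ℚ).mulVec y)

/-- The standard lattice `T = ℤv₁ ⊕ ℤv₂ ⊕ ℤv₃ ⊕ ℤv₄ ⊂ ℚ⁴`. -/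
def kummerT : Submodule ℤ (Fin 4 → ℚ) :=
  Submodule.span ℤ (Set.range fun i : Fin 4 => (Pi.single i 1 : Fin 4 → ℚ))

/-- The lattice `T' = (1/d)(H₁ ⊗ H₂)`, spanned by `dv₁, v₂, v₃, (1/d)v₄`. -/
def kummerT' (d : ℕ) : Submodule ℤ (Fin 4 → ℚ) :=
  Submodule.span ℤ
    {(d : ℚ) • (Pi.single 0 1 : Fin 4 → ℚ), (Pi.single 1 1 : Fin 4 → ℚ),
      (Pi.single 2 1 : Fin 4 → ℚ), ((d : ℚ))⁻¹ • (Pi.single 3 1 : Fin 4 → ℚ)}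

lemma kummerForm_apply (x y : Fin 4 → ℚ) :
    kummerForm x y = x 0 * y 3 - x 1 * y 2 - x 2 * y 1 + x 3 * y 0 := by
  simp [kummerForm, dotProduct, Matrix.mulVec, Fin.sum_univ_four,
    Matrix.vecHead, Matrix.vecTail, Function.comp]
  ring

/-- Auxiliary submodule: integer vectors. -/
def kQint : Submodule ℤ (Fin 4 → ℚ) where
  carrier := {x | ∀ i, ∃ n : ℤ, x i = n}
  add_mem' := by
    rintro x y hx hy i
    obtain ⟨m, hm⟩ := hx i; obtain ⟨n, hn⟩ := hy i
    exact ⟨m + n, by simp [hm, hn]⟩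
  zero_mem' := fun i => ⟨0, by simp⟩
  smul_mem' := by
    rintro z x hx i
    obtain ⟨n, hn⟩ := hx i
    exact ⟨z * n, by simp only [Pi.smul_apply, hn, zsmul_eq_mul]; push_cast; ring⟩

lemma memT_iff {x : Fin 4 → ℚ} : x ∈ kummerT ↔ ∀ i, ∃ n : ℤ, x i = n := by
  constructor
  · intro hx
    have h : kummerT ≤ kQint := Submodule.span_le.mpr ?_
    · exact h hx
    rintro _ ⟨i, rfl⟩ j
    rcases eq_or_ne j i with h | h
    · exact ⟨1, by subst h; simp⟩
    · exact ⟨0, by simp [Pi.single_eq_of_ne h]⟩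
  · intro hx
    obtain ⟨n0, h0⟩ := hx 0; obtain ⟨n1, h1⟩ := hx 1
    obtain ⟨n2, h2⟩ := hx 2; obtain ⟨n3, h3⟩ := hx 3
    have hxe : x = n0 • (Pi.single 0 1 : Fin 4 → ℚ) + n1 • Pi.single 1 1
        + n2 • Pi.single 2 1 + n3 • Pi.single 3 1 := by
      funext i
      fin_cases i <;>
        simp (config := { decide := true }) [h0, h1, h2, h3, Pi.single_apply, Fin.ext_iff]
    rw [hxe]
    exact add_mem (add_mem (add_mem
      (Submodule.smul_mem _ _ (Submodule.subset_span ⟨0, rfl⟩))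
      (Submodule.smul_mem _ _ (Submodule.subset_span ⟨1, rfl⟩)))
      (Submodule.smul_mem _ _ (Submodule.subset_span ⟨2, rfl⟩)))
      (Submodule.smul_mem _ _ (Submodule.subset_span ⟨3, rfl⟩))

/-- Auxiliary submodule for `T'`. -/
def kQint' (d : ℕ) : Submodule ℤ (Fin 4 → ℚ) where
  carrier := {x | (∃ a : ℤ, x 0 = a * d) ∧ (∃ b : ℤ, x 1 = b) ∧ (∃ c : ℤ, x 2 = c)
    ∧ (∃ e : ℤ, x 3 = e / d)}
  add_mem' := by
    rintro x y ⟨⟨a, ha⟩, ⟨b, hb⟩, ⟨c, hc⟩, ⟨e, he⟩⟩ ⟨⟨a', ha'⟩, ⟨b', hb'⟩, ⟨c', hc'⟩, ⟨e', he'⟩⟩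
    refine ⟨⟨a + a', ?_⟩, ⟨b + b', by simp [hb, hb']⟩, ⟨c + c', by simp [hc, hc']⟩,
      ⟨e + e', ?_⟩⟩
    · simp only [Pi.add_apply, ha, ha']; push_cast; ring
    · simp only [Pi.add_apply, he, he']; push_cast; ring
  zero_mem' := ⟨⟨0, by simp⟩, ⟨0, by simp⟩, ⟨0, by simp⟩, ⟨0, by simp⟩⟩
  smul_mem' := by
    rintro z x ⟨⟨a, ha⟩, ⟨b, hb⟩, ⟨c, hc⟩, ⟨e, he⟩⟩
    refine ⟨⟨z * a, ?_⟩, ⟨z * b, ?_⟩, ⟨z * c, ?_⟩, ⟨z * e, ?_⟩⟩ <;>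
      simp only [Pi.smul_apply, ha, hb, hc, he, zsmul_eq_mul] <;> push_cast <;> ring

lemma memT'_iff {d : ℕ} (hd : (d : ℚ) ≠ 0) {x : Fin 4 → ℚ} :
    x ∈ kummerT' d ↔ (∃ a : ℤ, x 0 = a * d) ∧ (∃ b : ℤ, x 1 = b) ∧ (∃ c : ℤ, x 2 = c)
      ∧ (∃ e : ℤ, x 3 = e / d) := by
  constructor
  · intro hx
    have h : kummerT' d ≤ kQint' d := Submodule.span_le.mpr ?_
    · exact h hx
    rintro v hv
    simp only [Set.mem_insert_iff, Set.mem_singleton_iff] at hv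
    rcases hv with rfl | rfl | rfl | rfl
    · exact ⟨⟨1, by simp⟩, ⟨0, by simp⟩, ⟨0, by simp⟩, ⟨0, by simp⟩⟩
    · exact ⟨⟨0, by simp⟩, ⟨1, by simp⟩, ⟨0, by simp⟩, ⟨0, by simp⟩⟩
    · exact ⟨⟨0, by simp⟩, ⟨0, by simp⟩, ⟨1, by simp⟩, ⟨0, by simp⟩⟩
    · exact ⟨⟨0, by simp⟩, ⟨0, by simp⟩, ⟨0, by simp⟩,
        ⟨1, by rw [Pi.smul_apply, Pi.single_eq_same, smul_eq_mul, mul_one]; push_cast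
               rw [inv_eq_one_div]⟩⟩
  · rintro ⟨⟨a, ha⟩, ⟨b, hb⟩, ⟨c, hc⟩, ⟨e, he⟩⟩
    have hxe : x = a • ((d : ℚ) • (Pi.single 0 1 : Fin 4 → ℚ))
        + b • (Pi.single 1 1 : Fin 4 → ℚ) + c • (Pi.single 2 1 : Fin 4 → ℚ)
        + e • (((d : ℚ))⁻¹ • (Pi.single 3 1 : Fin 4 → ℚ)) := by
      funext i
      fin_cases i <;>
        simp (config := { decide := true }) [ha, hb, hc, he, Pi.single_apply, Fin.ext_iff,
          div_eq_mul_inv] <;> ring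
    rw [hxe]
    exact add_mem (add_mem (add_mem
      (Submodule.smul_mem _ _ (Submodule.subset_span (by simp)))
      (Submodule.smul_mem _ _ (Submodule.subset_span (by simp))))
      (Submodule.smul_mem _ _ (Submodule.subset_span (by simp))))
      (Submodule.smul_mem _ _ (Submodule.subset_span (by simp)))


/-- The isometry `ℚ⁴ → ℚ⁴`, `x ↦ (x₀/d, x₁, x₂, d·x₃)`, as a `ℤ`-linear equivalence. -/
def kPhi (d : ℕ) (hd : (d : ℚ) ≠ 0) : (Fin 4 → ℚ) ≃ₗ[ℤ] (Fin 4 → ℚ) where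
  toFun x := ![x 0 * (d : ℚ)⁻¹, x 1, x 2, x 3 * d]
  map_add' x y := by funext i; fin_cases i <;> simp <;> ring
  map_smul' z x := by funext i; fin_cases i <;> simp <;> ring
  invFun x := ![x 0 * d, x 1, x 2, x 3 * (d : ℚ)⁻¹]
  left_inv x := by
    funext i
    fin_cases i <;> simp <;> field_simp
  right_inv x := by
    funext i
    fin_cases i <;> simp <;> field_simp

lemma kPhi_apply (d : ℕ) (hd : (d : ℚ) ≠ 0) (x : Fin 4 → ℚ) :
    kPhi d hd x = ![x 0 * (d : ℚ)⁻¹, x 1, x 2, x 3 * d] := rfl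

lemma kPhi_map (d : ℕ) (hd : (d : ℚ) ≠ 0) :
    (kummerT' d).map (kPhi d hd : (Fin 4 → ℚ) →ₗ[ℤ] (Fin 4 → ℚ)) = kummerT := by
  ext y
  simp only [Submodule.mem_map]
  constructor
  · rintro ⟨x, hx, rfl⟩
    obtain ⟨⟨a, ha⟩, ⟨b, hb⟩, ⟨c, hc⟩, ⟨e, he⟩⟩ := (memT'_iff hd).mp hx
    rw [memT_iff]
    intro i
    fin_cases i <;>
      simp [kPhi_apply, ha, hb, hc, he]
    · exact ⟨a, by field_simp⟩
    · exact ⟨e, by field_simp⟩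
  · intro hy
    obtain ⟨n0, h0⟩ := memT_iff.mp hy 0
    obtain ⟨n1, h1⟩ := memT_iff.mp hy 1
    obtain ⟨n2, h2⟩ := memT_iff.mp hy 2
    obtain ⟨n3, h3⟩ := memT_iff.mp hy 3
    refine ⟨![y 0 * d, y 1, y 2, y 3 * (d : ℚ)⁻¹], ?_, ?_⟩
    · rw [memT'_iff hd]
      refine ⟨⟨n0, by simp [h0]⟩, ⟨n1, by simp [h1]⟩, ⟨n2, by simp [h2]⟩,
        ⟨n3, by simp [h3, div_eq_mul_inv]⟩⟩
    · funext i
      fin_cases i <;> simp [kPhi_apply] <;> field_simp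

/-- The coordinate homomorphism `T → ℤ/d`, `x ↦ x₀ mod d`. -/
def kf (d : ℕ) : ↥kummerT →ₗ[ℤ] ZMod d where
  toFun x := (((x : Fin 4 → ℚ) 0).num : ZMod d)
  map_add' x y := by
    obtain ⟨m, hm⟩ := memT_iff.mp x.2 0
    obtain ⟨n, hn⟩ := memT_iff.mp y.2 0
    have h : ((x + y : kummerT) : Fin 4 → ℚ) 0 = ((m + n : ℤ) : ℚ) := by
      have h2 : ((x + y : kummerT) : Fin 4 → ℚ) 0 = (x : Fin 4 → ℚ) 0 + (y : Fin 4 → ℚ) 0 := rfl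
      rw [h2, hm, hn]; push_cast; ring
    rw [h, Rat.num_intCast, hm, hn, Rat.num_intCast, Rat.num_intCast]
    push_cast; ring
  map_smul' z x := by
    obtain ⟨m, hm⟩ := memT_iff.mp x.2 0
    have h : ((z • x : kummerT) : Fin 4 → ℚ) 0 = ((z * m : ℤ) : ℚ) := by
      have h2 : ((z • x : kummerT) : Fin 4 → ℚ) 0 = z • (x : Fin 4 → ℚ) 0 := rfl
      rw [h2, hm, zsmul_eq_mul]; push_cast; ring
    rw [h, Rat.num_intCast, hm, Rat.num_intCast]
    simp only [RingHom.id_apply, zsmul_eq_mul]; push_cast; ring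

/-- The coordinate homomorphism `T' → ℤ/d`, `x ↦ d·x₃ mod d`. -/
def kf' (d : ℕ) (hd : (d : ℚ) ≠ 0) : ↥(kummerT' d) →ₗ[ℤ] ZMod d where
  toFun x := ((((x : Fin 4 → ℚ) 3) * d).num : ZMod d)
  map_add' x y := by
    obtain ⟨-, -, -, e, he⟩ := (memT'_iff hd).mp x.2
    obtain ⟨-, -, -, e', he'⟩ := (memT'_iff hd).mp y.2
    have h : ((x + y : kummerT' d) : Fin 4 → ℚ) 3 * d = ((e + e' : ℤ) : ℚ) := by
      have h2 : ((x + y : kummerT' d) : Fin 4 → ℚ) 3 = (x : Fin 4 → ℚ) 3 + (y : Fin 4 → ℚ) 3 := rfl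
      rw [h2, he, he', ← add_div, div_mul_cancel₀ _ hd]; push_cast; ring
    have hx3 : ((x : Fin 4 → ℚ) 3) * d = ((e : ℤ) : ℚ) := by
      rw [he]; field_simp
    have hy3 : ((y : Fin 4 → ℚ) 3) * d = ((e' : ℤ) : ℚ) := by
      rw [he']; field_simp
    rw [h, Rat.num_intCast, hx3, hy3, Rat.num_intCast, Rat.num_intCast]
    push_cast; ring
  map_smul' z x := by
    obtain ⟨-, -, -, e, he⟩ := (memT'_iff hd).mp x.2
    have h : ((z • x : kummerT' d) : Fin 4 → ℚ) 3 * d = ((z * e : ℤ) : ℚ) := by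
      have h2 : ((z • x : kummerT' d) : Fin 4 → ℚ) 3 = z • (x : Fin 4 → ℚ) 3 := rfl
      rw [h2, he, zsmul_eq_mul, div_eq_mul_inv, ← mul_assoc, mul_assoc _ _ (d : ℚ),
        inv_mul_cancel₀ hd, mul_one]
      push_cast; ring
    have hx3 : ((x : Fin 4 → ℚ) 3) * d = ((e : ℤ) : ℚ) := by
      rw [he]; field_simp
    rw [h, Rat.num_intCast, hx3, Rat.num_intCast]
    simp only [RingHom.id_apply, zsmul_eq_mul]; push_cast; ring

/-- For `d > 1`, the lattice `T' = (1/d)(H₁⊗H₂)` spanned by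
`dv₁, v₂, v₃, (1/d)v₄` inside `T ⊗ ℚ` is an even (integral) lattice isometric to `T`,
and is a `d`-neighbor of `T`: `T/(T∩T') ≅ T'/(T∩T') ≅ ℤ/dℤ`. -/
theorem stmt14 (d : ℕ) (hd : 1 < d) :
    (∀ x ∈ kummerT' d, ∃ n : ℤ, kummerForm x x = 2 * n) ∧
    (∀ x ∈ kummerT' d, ∀ y ∈ kummerT' d, ∃ n : ℤ, kummerForm x y = (n : ℚ)) ∧
    (∃ e : ↥(kummerT' d) ≃ₗ[ℤ] ↥kummerT,
      ∀ x y : ↥(kummerT' d),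
        kummerForm (x : Fin 4 → ℚ) (y : Fin 4 → ℚ)
          = kummerForm (e x : Fin 4 → ℚ) (e y : Fin 4 → ℚ)) ∧
    Nonempty ((↥kummerT ⧸ Submodule.comap kummerT.subtype (kummerT ⊓ kummerT' d))
      ≃+ ZMod d) ∧
    Nonempty ((↥(kummerT' d) ⧸
        Submodule.comap (kummerT' d).subtype (kummerT ⊓ kummerT' d)) ≃+ ZMod d) := by
  have hd0 : (d : ℚ) ≠ 0 := by
    have : (0 : ℕ) < d := lt_trans one_pos hd
    exact_mod_cast this.ne'
  refine ⟨?_, ?_, ?_, ?_, ?_⟩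
  · -- evenness
    intro x hx
    obtain ⟨⟨a, ha⟩, ⟨b, hb⟩, ⟨c, hc⟩, ⟨e, he⟩⟩ := (memT'_iff hd0).mp hx
    refine ⟨a * e - b * c, ?_⟩
    rw [kummerForm_apply, ha, hb, hc, he]
    field_simp
    push_cast; ring
  · -- integrality
    intro x hx y hy
    obtain ⟨⟨a, ha⟩, ⟨b, hb⟩, ⟨c, hc⟩, ⟨e, he⟩⟩ := (memT'_iff hd0).mp hx
    obtain ⟨⟨a', ha'⟩, ⟨b', hb'⟩, ⟨c', hc'⟩, ⟨e', he'⟩⟩ := (memT'_iff hd0).mp hy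
    refine ⟨a * e' + e * a' - b * c' - c * b', ?_⟩
    rw [kummerForm_apply, ha, hb, hc, he, ha', hb', hc', he']
    field_simp
    push_cast; ring
  · -- isometry
    refine ⟨(kPhi d hd0).ofSubmodules _ _ (kPhi_map d hd0), fun x y => ?_⟩
    rw [LinearEquiv.ofSubmodules_apply, LinearEquiv.ofSubmodules_apply]
    rw [kummerForm_apply, kummerForm_apply, kPhi_apply, kPhi_apply]
    simp only [Matrix.cons_val_zero, Matrix.cons_val_one, Matrix.head_cons,
      Matrix.cons_val_two, Matrix.tail_cons, Matrix.cons_val_three, Matrix.head_fin_const]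
    field_simp
  · -- T/(T∩T') ≃ ℤ/d
    have hker : LinearMap.ker (kf d) = Submodule.comap kummerT.subtype (kummerT ⊓ kummerT' d) := by
      ext x
      obtain ⟨m0, h0⟩ := memT_iff.mp x.2 0
      obtain ⟨m1, h1⟩ := memT_iff.mp x.2 1
      obtain ⟨m2, h2⟩ := memT_iff.mp x.2 2
      obtain ⟨m3, h3⟩ := memT_iff.mp x.2 3
      simp only [LinearMap.mem_ker, Submodule.mem_comap, Submodule.mem_inf,
        Submodule.subtype_apply]
      have hfx : kf d x = ((m0 : ℤ) : ZMod d) := by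
        simp only [kf, LinearMap.coe_mk, AddHom.coe_mk, h0, Rat.num_intCast]
      rw [hfx, ZMod.intCast_zmod_eq_zero_iff_dvd]
      constructor
      · rintro ⟨a, rfl⟩
        refine ⟨x.2, (memT'_iff hd0).mpr ⟨⟨a, by rw [h0]; push_cast; ring⟩,
          ⟨m1, h1⟩, ⟨m2, h2⟩, ⟨m3 * d, by rw [h3]; field_simp; simp⟩⟩⟩
      · rintro ⟨-, hx'⟩
        obtain ⟨⟨a, ha⟩, -, -, -⟩ := (memT'_iff hd0).mp hx'
        refine ⟨a, ?_⟩
        have : ((m0 : ℤ) : ℚ) = ((d * a : ℤ) : ℚ) := by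
          rw [← h0, ha]; push_cast; ring
        exact_mod_cast this
    have hsurj : Function.Surjective (kf d) := by
      intro z
      obtain ⟨n, rfl⟩ := ZMod.intCast_surjective z
      have hv : (Pi.single 0 1 : Fin 4 → ℚ) ∈ kummerT := Submodule.subset_span ⟨0, rfl⟩
      refine ⟨n • ⟨Pi.single 0 1, hv⟩, ?_⟩
      rw [map_smul]
      have h1 : kf d ⟨Pi.single 0 1, hv⟩ = 1 := by
        simp [kf]
      rw [h1]
      simp [zsmul_eq_mul]
    exact ⟨((Submodule.quotEquivOfEq _ _ hker.symm).trans
      ((kf d).quotKerEquivOfSurjective hsurj)).toAddEquiv⟩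
  · -- T'/(T∩T') ≃ ℤ/d
    have hker : LinearMap.ker (kf' d hd0)
        = Submodule.comap (kummerT' d).subtype (kummerT ⊓ kummerT' d) := by
      ext x
      obtain ⟨⟨a, ha⟩, ⟨b, hb⟩, ⟨c, hc⟩, ⟨e, he⟩⟩ := (memT'_iff hd0).mp x.2
      simp only [LinearMap.mem_ker, Submodule.mem_comap, Submodule.mem_inf,
        Submodule.subtype_apply]
      have hfx : kf' d hd0 x = ((e : ℤ) : ZMod d) := by
        have hx3 : ((x : Fin 4 → ℚ) 3) * d = ((e : ℤ) : ℚ) := by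
          rw [he]; field_simp
        simp only [kf', LinearMap.coe_mk, AddHom.coe_mk, hx3, Rat.num_intCast]
      rw [hfx, ZMod.intCast_zmod_eq_zero_iff_dvd]
      constructor
      · rintro ⟨k, rfl⟩
        refine ⟨memT_iff.mpr ?_, x.2⟩
        intro i
        fin_cases i
        · exact ⟨a * d, by show (x : Fin 4 → ℚ) 0 = ((a * d : ℤ) : ℚ); rw [ha]; push_cast; ring⟩
        · exact ⟨b, hb⟩
        · exact ⟨c, hc⟩
        · refine ⟨k, ?_⟩
          show (x : Fin 4 → ℚ) 3 = ((k : ℤ) : ℚ)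
          rw [he]; push_cast; field_simp
      · rintro ⟨hx, -⟩
        obtain ⟨m3, h3⟩ := memT_iff.mp hx 3
        refine ⟨m3, ?_⟩
        have : ((e : ℤ) : ℚ) = ((d * m3 : ℤ) : ℚ) := by
          have := he.symm.trans h3
          push_cast
          field_simp at this
          linarith [this]
        exact_mod_cast this
    have hsurj : Function.Surjective (kf' d hd0) := by
      intro z
      obtain ⟨n, rfl⟩ := ZMod.intCast_surjective z
      have hv : ((d : ℚ))⁻¹ • (Pi.single 3 1 : Fin 4 → ℚ) ∈ kummerT' d :=
        Submodule.subset_span (by simp)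
      refine ⟨n • ⟨((d : ℚ))⁻¹ • (Pi.single 3 1 : Fin 4 → ℚ), hv⟩, ?_⟩
      rw [map_smul]
      have h1 : kf' d hd0 ⟨((d : ℚ))⁻¹ • (Pi.single 3 1 : Fin 4 → ℚ), hv⟩ = 1 := by
        have : (((d : ℚ))⁻¹ • (Pi.single 3 1 : Fin 4 → ℚ)) 3 * d = ((1 : ℤ) : ℚ) := by
          simp
          field_simp
        simp only [kf', LinearMap.coe_mk, AddHom.coe_mk, this, Rat.num_intCast]
        simp
      rw [h1]
      simp [zsmul_eq_mul]
    exact ⟨((Submodule.quotEquivOfEq _ _ hker.symm).trans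
      ((kf' d hd0).quotKerEquivOfSurjective hsurj)).toAddEquiv⟩
end
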